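/- arXiv:1508.01717 — 2 statements merged into one kernel-verified Lean document; each statement's English description precedes it below -/
import Mathlib

section
/- Let G be a bow-free acyclic path diagram (BAP) on d vertices, with directed-edge weight matrix B supported on the directed edges of G and symmetric matrix Ω supported on the bidirected edges of G (plus arbitrary diagonal). If (I − B)^{-1} Ω (I − B)^{-T} = I, then B = 0 and Ω = I. -/
open Matrix

private lemma bap_exists_path {d : ℕ} {Gd : Fin d → Fin d → Prop} {a b : Fin d}
    (h : Relation.TransGen Gd a b) :
    ∃ (l : ℕ) (v : ℕ → Fin d), 0 < l ∧ v 0 = a ∧ v l = b ∧ ∀ k < l, Gd (v k) (v (k + 1)) := by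
  induction h with
  | single hab =>
    exact ⟨1, fun k => if k = 0 then a else _, Nat.one_pos, rfl, rfl, by
      intro k hk
      interval_cases k
      simpa using hab⟩
  | @tail b c hab hbc ih =>
    obtain ⟨l, v, hl, h0, hlb, hstep⟩ := ih
    refine ⟨l + 1, fun k => if k ≤ l then v k else c, Nat.succ_pos _, ?_, ?_, ?_⟩
    · simpa using h0
    · simp
    · intro k hk
      by_cases hkl : k < l
      · have h1 : k ≤ l := le_of_lt hkl
        have h2 : k + 1 ≤ l := hkl
        simpa [h1, h2] using hstep k hkl
      · have hkeq : k = l := by omega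
        subst hkeq
        have : ¬ (k + 1 ≤ k) := by omega
        simpa [this, hlb] using hbc

/-- Parameter identifiability of a BAP at `Σ = I`.  Let `Gd` be the directed edges
(`Gd a b` means `a → b`) and `Gb` the bidirected edges (symmetric, irreflexive) of a
bow-free acyclic path diagram on `d` vertices.  Let `B` be supported on the directed
edges (`B i j = 0` unless `j → i`), and `Ω` symmetric with off-diagonal support on the
bidirected edges.  If `(I - B)⁻¹ Ω (I - B)⁻ᵀ = I`, then `B = 0` and `Ω = I`. -/
theorem bap_identifiable_at_identity {d : ℕ}
    (Gd Gb : Fin d → Fin d → Prop)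
    (hGbsymm : ∀ i j, Gb i j → Gb j i)
    (hGbirr : ∀ i, ¬ Gb i i)
    (hacyc : ∀ (l : ℕ) (v : ℕ → Fin d), 0 < l → (∀ k < l, Gd (v k) (v (k + 1))) →
      v 0 ≠ v l)
    (hbowfree : ∀ i j, (Gd i j ∨ Gd j i) → ¬ Gb i j)
    (B Ω : Matrix (Fin d) (Fin d) ℝ)
    (hB : ∀ i j, ¬ Gd j i → B i j = 0)
    (hΩsymm : Ωᵀ = Ω)
    (hΩ : ∀ i j, i ≠ j → ¬ Gb i j → Ω i j = 0)
    (hSigma : (1 - B)⁻¹ * Ω * ((1 - B)⁻¹)ᵀ = 1) :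
    B = 0 ∧ Ω = 1 := by
  classical
  have hGdirr : ∀ i, ¬ Gd i i := by
    intro i h
    exact hacyc 1 (fun _ => i) Nat.one_pos (fun k _ => h) rfl
  have hirr : ∀ a : Fin d, ¬ Relation.TransGen Gd a a := by
    intro a h
    obtain ⟨l, v, hl, h0, hlb, hstep⟩ := bap_exists_path h
    exact hacyc l v hl hstep (h0.trans hlb.symm)
  have hwf : WellFounded (fun j i : Fin d => Relation.TransGen Gd j i) := by
    have ht : IsTrans (Fin d) (fun j i : Fin d => Relation.TransGen Gd j i) :=
      ⟨fun a b c h1 h2 => h1.trans h2⟩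
    have hi : IsIrrefl (Fin d) (fun j i : Fin d => Relation.TransGen Gd j i) := ⟨hirr⟩
    exact Finite.wellFounded_of_trans_of_irrefl _
  by_cases hdet : IsUnit (1 - B).det
  · have h1 : (1 - B) * (1 - B)⁻¹ = 1 := Matrix.mul_nonsing_inv _ hdet
    have h1' : (1 - B)⁻¹ * (1 - B) = 1 := Matrix.nonsing_inv_mul _ hdet
    have h2 : ((1 - B)⁻¹)ᵀ * (1 - B)ᵀ = 1 := by
      rw [← Matrix.transpose_mul, h1, Matrix.transpose_one]
    have hΩeq : Ω = (1 - B) * (1 - B)ᵀ := by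
      calc Ω = ((1 - B) * (1 - B)⁻¹) * Ω * (((1 - B)⁻¹)ᵀ * (1 - B)ᵀ) := by
            rw [h1, h2, Matrix.one_mul, Matrix.mul_one]
        _ = (1 - B) * ((1 - B)⁻¹ * Ω * ((1 - B)⁻¹)ᵀ) * (1 - B)ᵀ := by
            simp only [Matrix.mul_assoc]
        _ = (1 - B) * 1 * (1 - B)ᵀ := by rw [hSigma]
        _ = (1 - B) * (1 - B)ᵀ := by rw [Matrix.mul_one]
    have key : ∀ i k, B i k = 0 := by
      intro i
      refine hwf.induction (C := fun i => ∀ k, B i k = 0) i ?_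
      intro x ih k
      by_cases hGd : Gd k x
      · have hxk : x ≠ k := by
          rintro rfl
          exact hGdirr x hGd
        have hΩ0 : Ω x k = 0 := hΩ x k hxk (hbowfree x k (Or.inr hGd))
        have hrow : ∀ m, B k m = 0 := ih k (Relation.TransGen.single hGd)
        have hc := congrFun (congrFun hΩeq x) k
        rw [hΩ0, Matrix.mul_apply] at hc
        simp only [Matrix.transpose_apply, Matrix.sub_apply, Matrix.one_apply, hrow,
          sub_zero] at hc
        simp only [mul_ite, mul_one, mul_zero, Finset.sum_ite_eq, Finset.mem_univ,
          if_true, if_neg hxk, zero_sub] at hc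
        linarith
      · exact hB x k hGd
    have hB0 : B = 0 := by
      ext i j
      exact key i j
    refine ⟨hB0, ?_⟩
    rw [hΩeq, hB0]
    simp
  · have hz : (1 - B)⁻¹ = 0 := Matrix.nonsing_inv_apply_not_isUnit _ hdet
    rw [hz] at hSigma
    simp only [Matrix.zero_mul, Matrix.mul_zero] at hSigma
    constructor
    · ext i j
      have : (0 : ℝ) = 1 := by
        simpa [Matrix.one_apply] using congrFun (congrFun hSigma i) i
      exact absurd this (by norm_num)
    · ext i j
      have : (0 : ℝ) = 1 := by
        simpa [Matrix.one_apply] using congrFun (congrFun hSigma i) i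
      exact absurd this (by norm_num)
end

section
/- Let G be a (possibly cyclic) path diagram on d nodes, B supported on directed edges of G with all eigenvalues of modulus < 1, and Ω symmetric supported on bidirected edges (plus diagonal). Writing φ = (I−B)^{-1} Ω (I−B)^{-T}, for all integers k, l ≥ 0 one has (B^k Ω (B^l)^T)_{ij} = Σ_{τ} c(τ; B, Ω) + Ω_{ii} 𝟙{i = j, k = l = 0}, where the sum is over all treks τ from i to j whose left side has length k and right side has length l, and c(τ; B, Ω) is the product over directed edges s→t of τ of B_{ts} times the product over bidirected edges s↔t of Ω_{st} times Ω_{H_τ H_τ} if τ has no bidirected edge (head H_τ). -/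
open Matrix BigOperators

/-- `IsTrek Gd Gb k l i j vL vR`: `(vL, vR)` is a trek from `i` to `j` with left side of
length `k` and right side of length `l` in the path diagram with directed edges `Gd`
(`Gd a b` means `a → b`) and bidirected edges `Gb`.  The left side is a directed path
from the source `vL 0` to `vL (last k) = i`, the right side from `vR 0` to
`vR (last l) = j`, and the two sources either coincide (common head; the totally empty
trek with `k = l = 0` is excluded) or are joined by a bidirected edge. -/
def IsTrek {d : ℕ} (Gd Gb : Fin d → Fin d → Prop) (k l : ℕ) (i j : Fin d)
    (vL : Fin (k + 1) → Fin d) (vR : Fin (l + 1) → Fin d) : Prop :=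
  vL (Fin.last k) = i ∧ vR (Fin.last l) = j ∧
    (∀ s : Fin k, Gd (vL s.castSucc) (vL s.succ)) ∧
    (∀ s : Fin l, Gd (vR s.castSucc) (vR s.succ)) ∧
    ((vL 0 = vR 0 ∧ ¬(k = 0 ∧ l = 0)) ∨ Gb (vL 0) (vR 0))


instance {d : ℕ} (Gd Gb : Fin d → Fin d → Prop) [DecidableRel Gd] [DecidableRel Gb]
    (k l : ℕ) (i j : Fin d) :
    DecidablePred (fun p : (Fin (k + 1) → Fin d) × (Fin (l + 1) → Fin d) =>
      IsTrek Gd Gb k l i j p.1 p.2) := fun p => by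
  unfold IsTrek; infer_instance

/-- The contribution `c(τ; B, Ω)` of a trek: the product of the directed edge weights
`B t s` over the edges `s → t` of both sides, times `Ω (vL 0) (vR 0)` — which is the
bidirected edge weight `Ω_{st}` if the trek contains a bidirected edge, and the head
variance `Ω_{H_τ H_τ}` otherwise. -/
noncomputable def trekWeight {d : ℕ} (B Ω : Matrix (Fin d) (Fin d) ℝ) (k l : ℕ)
    (vL : Fin (k + 1) → Fin d) (vR : Fin (l + 1) → Fin d) : ℝ :=
  (∏ s : Fin k, B (vL s.succ) (vL s.castSucc)) *
    (∏ s : Fin l, B (vR s.succ) (vR s.castSucc)) * Ω (vL 0) (vR 0)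

private lemma pow_apply_eq_sum_paths' {d : ℕ} (B : Matrix (Fin d) (Fin d) ℝ) :
    ∀ (k : ℕ) (i a : Fin d), (B ^ k) i a =
      ∑ v : Fin (k + 1) → Fin d,
        if v (Fin.last k) = i ∧ v 0 = a then
          ∏ s : Fin k, B (v s.succ) (v s.castSucc) else 0 := by
  intro k
  induction k with
  | zero =>
    intro i a
    rw [← (Equiv.funUnique (Fin 1) (Fin d)).symm.sum_comp]
    by_cases h : i = a
    · subst h; simp [Fin.last]
    · rw [pow_zero, Matrix.one_apply_ne h, Finset.sum_eq_zero]
      intro x _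
      rw [if_neg]
      rintro ⟨rfl, rfl⟩
      exact h rfl
  | succ k ih =>
    intro i a
    rw [← (Fin.consEquiv (fun _ => Fin d)).sum_comp, Fintype.sum_prod_type]
    have hprod : ∀ (x : Fin d) (w : Fin (k+1) → Fin d),
        (∏ s : Fin (k+1), B ((Fin.cons x w : Fin (k+2) → Fin d) s.succ)
          ((Fin.cons x w : Fin (k+2) → Fin d) s.castSucc)) =
        B (w 0) x * ∏ s : Fin k, B (w s.succ) (w s.castSucc) := by
      intro x w
      rw [Fin.prod_univ_succ]
      simp [← Fin.succ_castSucc]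
    have hlast : ∀ (x : Fin d) (w : Fin (k+1) → Fin d),
        (Fin.cons x w : Fin (k+2) → Fin d) (Fin.last (k+1)) = w (Fin.last k) := by
      intro x w
      rw [← Fin.succ_last, Fin.cons_succ]
    simp only [Fin.consEquiv_apply, hprod, hlast, Fin.cons_zero]
    rw [pow_succ, Matrix.mul_apply]
    simp_rw [ih, Finset.sum_mul]
    rw [Finset.sum_comm]
    conv_rhs => rw [Finset.sum_comm]
    apply Finset.sum_congr rfl
    intro w _
    by_cases h : w (Fin.last k) = i
    · simp [h, ite_and, mul_comm]
    · simp [h]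

/-- Trek-expansion of the summands of the Neumann series: for a (possibly cyclic) path
diagram with directed edges `Gd` and bidirected edges `Gb`, `B` supported on the
directed edges with all eigenvalues of modulus `< 1`, and `Ω` symmetric supported on
the bidirected edges plus diagonal, for all `k, l ≥ 0`,
`(B^k Ω (B^l)ᵀ) i j = ∑_τ c(τ; B, Ω) + Ω i i · 𝟙{i = j, k = l = 0}`,
summing over all treks from `i` to `j` with left length `k` and right length `l`. -/
theorem pow_mul_omega_mul_pow_transpose_entry_eq_sum_treks {d : ℕ}
    (Gd Gb : Fin d → Fin d → Prop) [DecidableRel Gd] [DecidableRel Gb]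
    (hGbsymm : ∀ i j, Gb i j → Gb j i) (hGbirr : ∀ i, ¬ Gb i i)
    (B Ω : Matrix (Fin d) (Fin d) ℝ)
    (hB : ∀ i j, ¬ Gd j i → B i j = 0)
    (hspec : ∀ μ ∈ spectrum ℂ (B.map (Complex.ofReal)), ‖μ‖ < 1)
    (hΩsymm : Ωᵀ = Ω)
    (hΩ : ∀ i j, i ≠ j → ¬ Gb i j → Ω i j = 0)
    (k l : ℕ) (i j : Fin d) :
    (B ^ k * Ω * ((B ^ l)ᵀ)) i j =
      (∑ τ : {p : (Fin (k + 1) → Fin d) × (Fin (l + 1) → Fin d) //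
                IsTrek Gd Gb k l i j p.1 p.2},
          trekWeight B Ω k l τ.1.1 τ.1.2) +
        (if i = j ∧ k = 0 ∧ l = 0 then Ω i i else 0) := by
  
  classical
  have h1 : ∀ b : Fin d, (B ^ k * Ω) i b =
      ∑ vL : Fin (k + 1) → Fin d,
        if vL (Fin.last k) = i then
          (∏ s : Fin k, B (vL s.succ) (vL s.castSucc)) * Ω (vL 0) b else 0 := by
    intro b
    rw [Matrix.mul_apply]
    simp_rw [pow_apply_eq_sum_paths' B k, Finset.sum_mul]
    rw [Finset.sum_comm]
    apply Finset.sum_congr rfl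
    intro vL _
    by_cases h : vL (Fin.last k) = i
    · simp [h, ite_and]
    · simp [h]
  have h2 : (B ^ k * Ω * ((B ^ l)ᵀ)) i j =
      ∑ vR : Fin (l + 1) → Fin d,
        if vR (Fin.last l) = j then
          (B ^ k * Ω) i (vR 0) * ∏ s : Fin l, B (vR s.succ) (vR s.castSucc) else 0 := by
    rw [Matrix.mul_apply]
    simp_rw [Matrix.transpose_apply, pow_apply_eq_sum_paths' B l, Finset.mul_sum]
    rw [Finset.sum_comm]
    apply Finset.sum_congr rfl
    intro vR _
    by_cases h : vR (Fin.last l) = j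
    · simp [h, ite_and, mul_comm]
    · simp [h]
  have key : (B ^ k * Ω * ((B ^ l)ᵀ)) i j =
      ∑ p : (Fin (k + 1) → Fin d) × (Fin (l + 1) → Fin d),
        if p.1 (Fin.last k) = i ∧ p.2 (Fin.last l) = j then
          trekWeight B Ω k l p.1 p.2 else 0 := by
    rw [h2, Fintype.sum_prod_type, Finset.sum_comm]
    apply Finset.sum_congr rfl
    intro vR _
    by_cases hR : vR (Fin.last l) = j
    · rw [if_pos hR, h1 (vR 0), Finset.sum_mul]
      apply Finset.sum_congr rfl
      intro vL _
      by_cases hL : vL (Fin.last k) = i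
      · rw [if_pos hL, if_pos ⟨hL, hR⟩]
        unfold trekWeight
        ring
      · simp [hL]
    · simp [hR]
  rw [key,
    ← Finset.sum_filter_add_sum_filter_not Finset.univ
      (fun p : (Fin (k + 1) → Fin d) × (Fin (l + 1) → Fin d) =>
        IsTrek Gd Gb k l i j p.1 p.2)]
  congr 1
  · rw [Finset.sum_subtype
      (p := fun p : (Fin (k + 1) → Fin d) × (Fin (l + 1) → Fin d) =>
        IsTrek Gd Gb k l i j p.1 p.2)
      (Finset.univ.filter fun p : (Fin (k + 1) → Fin d) × (Fin (l + 1) → Fin d) =>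
        IsTrek Gd Gb k l i j p.1 p.2) (by intro x; simp)]
    apply Finset.sum_congr rfl
    intro τ _
    rw [if_pos ⟨τ.2.1, τ.2.2.1⟩]
  · by_cases hcase : i = j ∧ k = 0 ∧ l = 0
    · obtain ⟨hij, hk, hl⟩ := hcase
      subst hk; subst hl; subst hij
      rw [if_pos ⟨rfl, rfl, rfl⟩]
      rw [Finset.sum_eq_single_of_mem
        ((fun _ => i, fun _ => i) : (Fin 1 → Fin d) × (Fin 1 → Fin d))]
      · rw [if_pos ⟨rfl, rfl⟩]
        unfold trekWeight
        simp
      · rw [Finset.mem_filter]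
        refine ⟨Finset.mem_univ _, ?_⟩
        rintro ⟨-, -, -, -, (⟨-, hne⟩ | hgb)⟩
        · exact hne ⟨rfl, rfl⟩
        · exact hGbirr i hgb
      · intro p _ hpne
        rw [if_neg]
        rintro ⟨hp1, hp2⟩
        apply hpne
        have e1 : p.1 = fun _ => i := by
          funext x
          rw [Subsingleton.elim x (Fin.last 0)]
          exact hp1
        have e2 : p.2 = fun _ => i := by
          funext x
          rw [Subsingleton.elim x (Fin.last 0)]
          exact hp2
        exact Prod.ext e1 e2
    · rw [if_neg hcase]
      apply Finset.sum_eq_zero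
      intro p hp
      rw [Finset.mem_filter] at hp
      obtain ⟨-, hnt⟩ := hp
      by_cases hcond : p.1 (Fin.last k) = i ∧ p.2 (Fin.last l) = j
      swap
      · rw [if_neg hcond]
      rw [if_pos hcond]
      by_cases hedL : ∀ s : Fin k, Gd (p.1 s.castSucc) (p.1 s.succ)
      swap
      · push_neg at hedL
        obtain ⟨s, hs⟩ := hedL
        unfold trekWeight
        rw [Finset.prod_eq_zero (Finset.mem_univ s) (hB _ _ hs)]
        ring
      by_cases hedR : ∀ s : Fin l, Gd (p.2 s.castSucc) (p.2 s.succ)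
      swap
      · push_neg at hedR
        obtain ⟨s, hs⟩ := hedR
        unfold trekWeight
        rw [Finset.prod_eq_zero (Finset.mem_univ s) (hB _ _ hs)]
        ring
      by_cases heq : p.1 0 = p.2 0
      · exfalso
        apply hcase
        have hkl : k = 0 ∧ l = 0 := by
          by_contra h
          exact hnt ⟨hcond.1, hcond.2, hedL, hedR, Or.inl ⟨heq, h⟩⟩
        obtain ⟨hk, hl⟩ := hkl
        subst hk; subst hl
        refine ⟨?_, rfl, rfl⟩
        rw [← hcond.1, ← hcond.2, Fin.last_zero]
        exact heq
      · have hnGb : ¬ Gb (p.1 0) (p.2 0) := fun hg =>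
          hnt ⟨hcond.1, hcond.2, hedL, hedR, Or.inr hg⟩
        unfold trekWeight
        rw [hΩ _ _ heq hnGb, mul_zero]
end
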